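/- Let S be the regular δ-grid in ℝ^d (points of the form (k₁δ,...,k_dδ) with integer kᵢ) and let Ω be a convex body in ℝ^d containing a ball of radius r₀ ≥ 10 d^{3/2} δ. Then the number n of grid points of S contained in Ω satisfies (9/10)·vol(Ω)·δ^{-d} ≤ n ≤ (11/10)·vol(Ω)·δ^{-d}. -/

import Mathlib

open MeasureTheory Set Pointwise

section Aux

variable {E : Type*} [NormedAddCommGroup E] [NormedSpace ℝ E]

theorem gpc_aux_outer {Ω : Set E} (hconv : Convex ℝ Ω) {x₀ : E} {r ε : ℝ} (hε : 0 < ε)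
    (hball : Metric.closedBall x₀ r ⊆ Ω) {x u : E} (hx : x ∈ Ω) (hu : ‖u‖ ≤ ε * r) :
    x + u ∈ (fun z => x₀ + (1 + ε) • (z - x₀)) '' Ω := by
  have hw : x₀ + ε⁻¹ • u ∈ Ω := by
    apply hball
    simp only [Metric.mem_closedBall, dist_eq_norm]
    rw [show x₀ + ε⁻¹ • u - x₀ = ε⁻¹ • u by abel]
    rw [norm_smul, Real.norm_eq_abs, abs_of_pos (inv_pos.2 hε), inv_mul_le_iff₀ hε]
    linarith [hu]
  have h1ε : (0:ℝ) < 1 + ε := by linarith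
  refine ⟨(1/(1+ε)) • x + (ε/(1+ε)) • (x₀ + ε⁻¹ • u), ?_, ?_⟩
  · exact hconv hx hw (by positivity) (by positivity) (by field_simp)
  · match_scalars <;> (field_simp; try ring)

theorem gpc_aux_inner {Ω : Set E} (hconv : Convex ℝ Ω) {x₀ : E} {r ε : ℝ} (hε : 0 < ε)
    (hε1 : ε ≤ 1) (hball : Metric.closedBall x₀ r ⊆ Ω) {y u : E}
    (hy : y ∈ (fun z => x₀ + (1 - ε) • (z - x₀)) '' Ω) (hu : ‖u‖ ≤ ε * r) :
    y + u ∈ Ω := by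
  obtain ⟨x, hx, rfl⟩ := hy
  have hw : x₀ + ε⁻¹ • u ∈ Ω := by
    apply hball
    simp only [Metric.mem_closedBall, dist_eq_norm]
    rw [show x₀ + ε⁻¹ • u - x₀ = ε⁻¹ • u by abel]
    rw [norm_smul, Real.norm_eq_abs, abs_of_pos (inv_pos.2 hε), inv_mul_le_iff₀ hε]
    linarith [hu]
  have key : x₀ + (1 - ε) • (x - x₀) + u = (1 - ε) • x + ε • (x₀ + ε⁻¹ • u) := by
    match_scalars <;> (field_simp; try ring)
  rw [key]
  exact hconv hx hw (by linarith) (le_of_lt hε) (by ring)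

/-- Volume of the image of a set under homothety about `x₀` with ratio `c ≥ 0`. -/
theorem gpc_vol_homothety {d : ℕ} (x₀ : EuclideanSpace ℝ (Fin d)) {c : ℝ} (hc : 0 ≤ c)
    (s : Set (EuclideanSpace ℝ (Fin d))) :
    volume ((fun z => x₀ + c • (z - x₀)) '' s) = ENNReal.ofReal (c ^ d) * volume s := by
  have himg : (fun z => x₀ + c • (z - x₀)) '' s = (x₀ - c • x₀) +ᵥ (c • s) := by
    ext y
    simp only [mem_image, Set.mem_vadd_set, Set.mem_smul_set, vadd_eq_add]
    constructor
    · rintro ⟨x, hx, rfl⟩; exact ⟨c • x, ⟨x, hx, rfl⟩, by module⟩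
    · rintro ⟨_, ⟨x, hx, rfl⟩, rfl⟩; exact ⟨x, hx, by module⟩
  have htrans : volume ((x₀ - c • x₀) +ᵥ (c • s)) = volume (c • s) := by
    have : (x₀ - c • x₀) +ᵥ (c • s) = (fun y => -(x₀ - c • x₀) + y) ⁻¹' (c • s) := by
      ext y; simp [Set.mem_vadd_set_iff_neg_vadd_mem]
    rw [this, measure_preimage_add]
  rw [himg, htrans, Measure.addHaar_smul_of_nonneg volume hc, finrank_euclideanSpace_fin]

theorem gpc_norm_le {d : ℕ} (x : EuclideanSpace ℝ (Fin d)) {c : ℝ} (hc : 0 ≤ c)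
    (h : ∀ i, |x i| ≤ c) : ‖x‖ ≤ Real.sqrt d * c := by
  rw [EuclideanSpace.norm_eq, ← Real.sqrt_sq hc, ← Real.sqrt_mul (by positivity)]
  apply Real.sqrt_le_sqrt
  calc ∑ i, ‖x i‖ ^ 2 ≤ ∑ _i : Fin d, c ^ 2 := by
        apply Finset.sum_le_sum
        intro i _
        have h2 : ‖x i‖ ≤ c := by rw [Real.norm_eq_abs]; exact h i
        nlinarith [norm_nonneg (x i)]
    _ = d * c ^ 2 := by simp [Finset.sum_const]

end Aux

set_option maxHeartbeats 2000000 in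
/-- Lemma (grid point count): if a convex body `Ω` in `ℝ^d` contains a ball of radius
`r₀ ≥ 10 d^{3/2} δ`, then the number of points of the regular `δ`-grid in `Ω` is between
`(9/10)·vol(Ω)·δ^{-d}` and `(11/10)·vol(Ω)·δ^{-d}`. -/
theorem grid_point_count (d : ℕ) (hd : 1 ≤ d) (δ r₀ : ℝ) (hδ : 0 < δ)
    (hr : 10 * (d : ℝ) ^ ((3 : ℝ) / 2) * δ ≤ r₀)
    (Ω : Set (EuclideanSpace ℝ (Fin d)))
    (hconv : Convex ℝ Ω) (hcomp : IsCompact Ω) (hint : (interior Ω).Nonempty)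
    (x₀ : EuclideanSpace ℝ (Fin d)) (hball : Metric.closedBall x₀ r₀ ⊆ Ω) :
    (9 / 10) * (volume Ω).toReal * δ ^ (-(d : ℝ)) ≤
      ({x ∈ Ω | ∀ i, ∃ k : ℤ, x i = k * δ}.ncard : ℝ) ∧
    ({x ∈ Ω | ∀ i, ∃ k : ℤ, x i = k * δ}.ncard : ℝ) ≤
      (11 / 10) * (volume Ω).toReal * δ ^ (-(d : ℝ)) := by
  classical
  have hd0 : (0:ℝ) < d := by exact_mod_cast Nat.lt_of_lt_of_le Nat.zero_lt_one hd
  have hsd : (0:ℝ) < Real.sqrt d := Real.sqrt_pos.2 hd0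
  -- `d^{3/2} = d * √d`
  have hd32 : (d : ℝ) ^ ((3 : ℝ) / 2) = d * Real.sqrt d := by
    rw [show (3:ℝ)/2 = 1 + 1/2 by norm_num, Real.rpow_add hd0, Real.rpow_one,
      ← Real.sqrt_eq_rpow]
  have hr' : 10 * ((d:ℝ) * Real.sqrt d) * δ ≤ r₀ := by rwa [hd32] at hr
  have hr₀ : 0 < r₀ := lt_of_lt_of_le (by positivity) hr'
  -- the parameter ε
  set ε : ℝ := Real.sqrt d * δ / (2 * r₀) with hε_def
  have hε : 0 < ε := by positivity
  have hεr : ε * r₀ = Real.sqrt d * (δ / 2) := by rw [hε_def, div_mul_eq_mul_div, div_eq_iff (by positivity)]; ring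
  have hεd : ε * d ≤ 1 / 20 := by
    rw [hε_def, div_mul_eq_mul_div, div_le_div_iff₀ (by positivity) (by norm_num)]
    nlinarith [hr', hsd, hδ, hd0]
  have hε1 : ε ≤ 1/20 := by nlinarith [hεd, hε, hd0, (by exact_mod_cast hd : (1:ℝ) ≤ d)]
  -- grid points
  set p : (Fin d → ℤ) → EuclideanSpace ℝ (Fin d) := fun k => WithLp.toLp 2 (fun i => (k i : ℝ) * δ) with hp_def
  have hp_apply : ∀ k i, p k i = (k i : ℝ) * δ := fun k i => rfl
  have hpinj : Function.Injective p := by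
    intro k k' h
    funext i
    have : p k i = p k' i := by rw [h]
    rw [hp_apply, hp_apply] at this
    exact_mod_cast mul_right_cancel₀ (ne_of_gt hδ) this
  set G : Set (EuclideanSpace ℝ (Fin d)) := {x ∈ Ω | ∀ i, ∃ k : ℤ, x i = k * δ} with hG_def
  set K : Set (Fin d → ℤ) := {k | p k ∈ Ω} with hK_def
  have hGK : G = p '' K := by
    ext x
    constructor
    · rintro ⟨hxΩ, hx⟩
      choose k hk using hx
      have hxp : x = p k := by ext i; exact hk i
      exact ⟨k, by rw [hK_def, mem_setOf_eq, ← hxp]; exact hxΩ, hxp.symm⟩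
    · rintro ⟨k, hk, rfl⟩
      exact ⟨hk, fun i => ⟨k i, rfl⟩⟩
  -- K is finite
  obtain ⟨R, hR⟩ := hcomp.isBounded.subset_closedBall 0
  have hKfin : K.Finite := by
    apply Set.Finite.subset (Set.Finite.pi (fun _ : Fin d => Set.finite_Icc (-⌈R/δ⌉) ⌈R/δ⌉))
    intro k hk
    have hnorm : ‖p k‖ ≤ R := by
      have := hR hk
      simpa [dist_eq_norm] using this
    intro i _
    have hcoord : |(k i : ℝ) * δ| ≤ ‖p k‖ := by
      rw [← hp_apply k i, ← Real.norm_eq_abs]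
      rw [EuclideanSpace.norm_eq]
      have h1 : ‖p k i‖ ^ 2 ≤ ∑ j, ‖p k j‖ ^ 2 :=
        Finset.single_le_sum (f := fun j => ‖p k j‖ ^ 2) (fun j _ => by positivity)
          (Finset.mem_univ i)
      calc ‖p k i‖ = Real.sqrt (‖p k i‖ ^ 2) := by
            rw [Real.sqrt_sq (norm_nonneg _)]
        _ ≤ _ := Real.sqrt_le_sqrt h1
    have habs : |(k i : ℝ)| ≤ R / δ := by
      rw [le_div_iff₀ hδ]
      calc |(k i : ℝ)| * δ = |(k i : ℝ) * δ| := by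
            rw [abs_mul, abs_of_pos hδ]
        _ ≤ R := le_trans hcoord hnorm
    constructor
    · have : -(R/δ) ≤ (k i : ℝ) := neg_le_of_abs_le habs
      have h2 : (↑(-⌈R/δ⌉) : ℝ) ≤ (k i : ℝ) := by
        push_cast
        exact le_trans (by linarith [Int.le_ceil (R/δ)]) this
      exact_mod_cast h2
    · have : (k i : ℝ) ≤ R/δ := le_of_abs_le habs
      have h2 : (k i : ℝ) ≤ (⌈R/δ⌉ : ℝ) := le_trans this (Int.le_ceil _)
      exact_mod_cast h2
  have hGfin : G.Finite := hGK ▸ hKfin.image p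
  have hncard : G.ncard = hKfin.toFinset.card := by
    rw [hGK, Set.ncard_image_of_injective _ hpinj, Set.ncard_eq_toFinset_card _ hKfin]
  set n : ℕ := hKfin.toFinset.card with hn_def
  -- cells
  set cellPi : (Fin d → ℤ) → Set (Fin d → ℝ) := fun k =>
    Set.pi univ fun i => Set.Ico (((k i : ℝ) - 1/2) * δ) (((k i : ℝ) + 1/2) * δ) with hcellPi_def
  set cell : (Fin d → ℤ) → Set (EuclideanSpace ℝ (Fin d)) := fun k =>
    (MeasurableEquiv.toLp 2 (Fin d → ℝ)).symm ⁻¹' (cellPi k) with hcell_def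
  have hcellPi_meas : ∀ k, MeasurableSet (cellPi k) :=
    fun k => MeasurableSet.univ_pi fun i => measurableSet_Ico
  have hcell_meas : ∀ k, MeasurableSet (cell k) :=
    fun k => (MeasurableEquiv.toLp 2 (Fin d → ℝ)).symm.measurable (hcellPi_meas k)
  have hcell_mem : ∀ k (x : EuclideanSpace ℝ (Fin d)),
      x ∈ cell k ↔ ∀ i, ((k i : ℝ) - 1/2) * δ ≤ x i ∧ x i < ((k i : ℝ) + 1/2) * δ := by
    intro k x
    simp [hcell_def, hcellPi_def, Set.mem_pi]
  have hcell_vol : ∀ k, volume (cell k) = ENNReal.ofReal (δ ^ d) := by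
    intro k
    have := (EuclideanSpace.volume_preserving_symm_measurableEquiv_toLp (Fin d)).measure_preimage
      (hcellPi_meas k).nullMeasurableSet
    rw [hcell_def]
    rw [this, hcellPi_def, volume_pi_pi]
    have : ∀ i : Fin d, volume (Set.Ico (((k i : ℝ) - 1/2) * δ) (((k i : ℝ) + 1/2) * δ))
        = ENNReal.ofReal δ := by
      intro i
      rw [Real.volume_Ico]
      congr 1
      ring
    simp only [this, Finset.prod_const, Finset.card_univ, Fintype.card_fin]
    rw [← ENNReal.ofReal_pow (le_of_lt hδ)]
  -- disjointness of cells
  have hcell_disj : (↑hKfin.toFinset : Set (Fin d → ℤ)).PairwiseDisjoint cell := by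
    intro k _ k' _ hkk'
    apply Set.disjoint_left.2
    intro x hx hx'
    apply hkk'
    funext i
    have h1 := (hcell_mem k x).1 hx i
    have h2 := (hcell_mem k' x).1 hx' i
    by_contra hne
    rcases lt_or_gt_of_ne hne with h | h
    · have : (k i : ℝ) + 1 ≤ k' i := by exact_mod_cast h
      nlinarith [h1.2, h2.1]
    · have : (k' i : ℝ) + 1 ≤ k i := by exact_mod_cast h
      nlinarith [h1.1, h2.2]
  -- distance from a point in a cell to the center
  have hcell_close : ∀ k (x : EuclideanSpace ℝ (Fin d)), x ∈ cell k →
      ‖x - p k‖ ≤ Real.sqrt d * (δ/2) := by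
    intro k x hx
    apply gpc_norm_le _ (by positivity)
    intro i
    have h := (hcell_mem k x).1 hx i
    have hsub : (x - p k) i = x i - (k i : ℝ) * δ := by
      rw [PiLp.sub_apply, hp_apply]
    have e1 : ((k i : ℝ) - 1/2) * δ = (k i : ℝ) * δ - δ/2 := by ring
    have e2 : ((k i : ℝ) + 1/2) * δ = (k i : ℝ) * δ + δ/2 := by ring
    rw [hsub, abs_le]
    exact ⟨by linarith [h.1], by linarith [h.2]⟩
  -- every point is in the cell of its rounding
  have hcell_cover : ∀ y : EuclideanSpace ℝ (Fin d), ∃ k, y ∈ cell k := by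
    intro y
    refine ⟨fun i => ⌊y i / δ + 1/2⌋, ?_⟩
    rw [hcell_mem]
    intro i
    dsimp only
    have h1 := Int.floor_le (y i / δ + 1/2)
    have h2 := Int.lt_floor_add_one (y i / δ + 1/2)
    have e : y i / δ * δ = y i := div_mul_cancel₀ _ (ne_of_gt hδ)
    have e2 : (y i / δ + 1/2) * δ = y i + δ/2 := by rw [add_mul, e]; ring
    set f : ℝ := ((⌊y i / δ + 1/2⌋ : ℤ) : ℝ) with hf_def
    have e3 : (f - 1/2) * δ = f * δ - δ/2 := by ring
    have e4 : (f + 1/2) * δ = f * δ + δ/2 := by ring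
    constructor
    · have h3 := mul_le_mul_of_nonneg_right h1 (le_of_lt hδ)
      rw [e2] at h3
      rw [e3]
      linarith
    · have h3 := mul_lt_mul_of_pos_right h2 hδ
      rw [e2] at h3
      have e5 : (f + 1) * δ = f * δ + δ := by ring
      rw [e5] at h3
      rw [e4]
      linarith
  -- shrunken and expanded bodies
  set Ωm : Set (EuclideanSpace ℝ (Fin d)) := (fun z => x₀ + (1 - ε) • (z - x₀)) '' Ω with hΩm_def
  set Ωp : Set (EuclideanSpace ℝ (Fin d)) := (fun z => x₀ + (1 + ε) • (z - x₀)) '' Ω with hΩp_def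
  have hΩm_vol : volume Ωm = ENNReal.ofReal ((1 - ε) ^ d) * volume Ω :=
    gpc_vol_homothety x₀ (by linarith) Ω
  have hΩp_vol : volume Ωp = ENNReal.ofReal ((1 + ε) ^ d) * volume Ω :=
    gpc_vol_homothety x₀ (by linarith) Ω
  -- lower bound: Ωm ⊆ ⋃ k ∈ K, cell k
  have hlow_sub : Ωm ⊆ ⋃ k ∈ hKfin.toFinset, cell k := by
    intro y hy
    obtain ⟨k, hk⟩ := hcell_cover y
    have hpk : p k ∈ Ω := by
      have : y + (p k - y) ∈ Ω := by
        apply gpc_aux_inner hconv hε (by linarith) hball hy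
        rw [hεr, ← norm_neg]
        simpa using hcell_close k y hk
      simpa using this
    have hkK : k ∈ hKfin.toFinset := (Set.Finite.mem_toFinset hKfin).2 hpk
    exact Set.mem_biUnion hkK hk
  -- upper bound: ⋃ k ∈ K, cell k ⊆ Ωp
  have hup_sub : (⋃ k ∈ hKfin.toFinset, cell k) ⊆ Ωp := by
    intro x hx
    simp only [Set.mem_iUnion] at hx
    obtain ⟨k, hk, hxk⟩ := hx
    have hpk : p k ∈ Ω := (Set.Finite.mem_toFinset hKfin).1 hk
    have : p k + (x - p k) ∈ Ωp := by
      apply gpc_aux_outer hconv hε hball hpk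
      rw [hεr]
      exact hcell_close k x hxk
    simpa using this
  -- volume of the union of cells
  have hunion_vol : volume (⋃ k ∈ hKfin.toFinset, cell k)
      = (n : ENNReal) * ENNReal.ofReal (δ ^ d) := by
    rw [measure_biUnion_finset hcell_disj (fun k _ => hcell_meas k)]
    simp only [hcell_vol, Finset.sum_const, nsmul_eq_mul, hn_def]
  -- ENNReal inequalities
  have hlowE : ENNReal.ofReal ((1 - ε) ^ d) * volume Ω ≤ (n : ENNReal) * ENNReal.ofReal (δ ^ d) := by
    rw [← hΩm_vol, ← hunion_vol]
    exact measure_mono hlow_sub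
  have hupE : (n : ENNReal) * ENNReal.ofReal (δ ^ d) ≤ ENNReal.ofReal ((1 + ε) ^ d) * volume Ω := by
    rw [← hΩp_vol, ← hunion_vol]
    exact measure_mono hup_sub
  -- pass to real numbers
  set V : ℝ := (volume Ω).toReal with hV_def
  have hV0 : 0 ≤ V := ENNReal.toReal_nonneg
  have hΩfin : volume Ω ≠ ⊤ := hcomp.measure_lt_top.ne
  have hε1' : ε ≤ 1 := by linarith
  have hlowR : (1 - ε) ^ d * V ≤ (n : ℝ) * δ ^ d := by
    have := ENNReal.toReal_mono (by
        exact ENNReal.mul_ne_top (ENNReal.natCast_ne_top n) ENNReal.ofReal_ne_top) hlowE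
    rwa [ENNReal.toReal_mul, ENNReal.toReal_mul,
      ENNReal.toReal_ofReal (pow_nonneg (by linarith) d),
      ENNReal.toReal_natCast, ENNReal.toReal_ofReal (by positivity)] at this
  have hupR : (n : ℝ) * δ ^ d ≤ (1 + ε) ^ d * V := by
    have := ENNReal.toReal_mono (ENNReal.mul_ne_top ENNReal.ofReal_ne_top hΩfin) hupE
    rwa [ENNReal.toReal_mul, ENNReal.toReal_mul,
      ENNReal.toReal_ofReal (pow_nonneg (by linarith) d),
      ENNReal.toReal_natCast, ENNReal.toReal_ofReal (by positivity)] at this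
  -- numeric estimates
  have hbern : 1 - (d : ℝ) * ε ≤ (1 - ε) ^ d := by
    have := one_add_mul_le_pow (a := -ε) (by linarith) d
    rw [show (1:ℝ) + -ε = 1 - ε by ring] at this
    linarith [this]
  have h19 : (19:ℝ)/20 ≤ (1 - ε) ^ d := by
    have : (d : ℝ) * ε ≤ 1/20 := by linarith [hεd]
    linarith [hbern]
  have hprod : (1 + ε) ^ d * (1 - ε) ^ d ≤ 1 := by
    rw [← mul_pow]
    have h1 : (0:ℝ) ≤ (1 + ε) * (1 - ε) := by nlinarith
    have h2 : (1 + ε) * (1 - ε) ≤ 1 := by nlinarith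
    exact pow_le_one₀ h1 h2
  have hup2 : (1 + ε) ^ d ≤ 20/19 := by
    nlinarith [hprod, h19, pow_pos (show (0:ℝ) < 1 + ε by linarith) d]
  -- wrap up
  have hδd : (0:ℝ) < δ ^ d := pow_pos hδ d
  have hrpow : δ ^ (-(d : ℝ)) = (δ ^ d)⁻¹ := by
    rw [Real.rpow_neg (le_of_lt hδ), Real.rpow_natCast]
  rw [hrpow, hncard]
  constructor
  · have key : (9/10) * V ≤ (n : ℝ) * δ ^ d := by
      nlinarith [mul_le_mul_of_nonneg_right h19 hV0, hlowR]
    calc (9/10) * V * (δ ^ d)⁻¹ ≤ ((n : ℝ) * δ ^ d) * (δ ^ d)⁻¹ :=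
          mul_le_mul_of_nonneg_right key (by positivity)
      _ = (n : ℝ) := by field_simp
  · have key : (n : ℝ) * δ ^ d ≤ (11/10) * V := by
      nlinarith [mul_le_mul_of_nonneg_right hup2 hV0, hupR]
    calc (n : ℝ) = ((n : ℝ) * δ ^ d) * (δ ^ d)⁻¹ := by field_simp
      _ ≤ (11/10) * V * (δ ^ d)⁻¹ := mul_le_mul_of_nonneg_right key (by positivity)
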